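/- Let ψ1 and ψ2 be modal μ-calculus formulas such that ψ1∨ψ2 is in normal form, let κ : P → Set S be a valuation and s : S a state. Then Player 0 wins the model-checking parity game G(ψ1∨ψ2) from the vertex (ψ1∨ψ2, s) if and only if Player 0 wins G(ψ1) from (ψ1, s) or Player 0 wins G(ψ2) from (ψ2, s). -/

import Mathlib

/-- Formulas of the modal μ-calculus over a type `P` of propositional variables:
`⊥ | ⊤ | p | ¬p | φ∧φ | φ∨φ | □φ | ◇φ | μp.φ | νp.φ`. -/
inductive MuForm (P : Type*) where
  | bot : MuForm P
  | top : MuForm P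
  | var (p : P) : MuForm P
  | nvar (p : P) : MuForm P
  | and (φ ψ : MuForm P) : MuForm P
  | or (φ ψ : MuForm P) : MuForm P
  | box (φ : MuForm P) : MuForm P
  | dia (φ : MuForm P) : MuForm P
  | mu (p : P) (φ : MuForm P) : MuForm P
  | nu (p : P) (φ : MuForm P) : MuForm P
  deriving DecidableEq

variable {P S : Type*}

/-- The set of free variables of a μ-calculus formula (`μp`/`νp` bind `p`). -/
def MuForm.freeVars : MuForm P → Set P
  | .bot => ∅
  | .top => ∅
  | .var p => {p}
  | .nvar p => {p}
  | .and φ ψ => φ.freeVars ∪ ψ.freeVars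
  | .or φ ψ => φ.freeVars ∪ ψ.freeVars
  | .box φ => φ.freeVars
  | .dia φ => φ.freeVars
  | .mu p φ => φ.freeVars \ {p}
  | .nu p φ => φ.freeVars \ {p}

/-- `p` occurs only positively in a μ-calculus formula. -/
def MuForm.PositiveIn (p : P) : MuForm P → Prop
  | .bot => True
  | .top => True
  | .var _ => True
  | .nvar q => q ≠ p
  | .and φ ψ => φ.PositiveIn p ∧ ψ.PositiveIn p
  | .or φ ψ => φ.PositiveIn p ∧ ψ.PositiveIn p
  | .box φ => φ.PositiveIn p
  | .dia φ => φ.PositiveIn p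
  | .mu q φ => q = p ∨ φ.PositiveIn p
  | .nu q φ => q = p ∨ φ.PositiveIn p

/-- Semantics `⟦φ⟧κ ⊆ S` of a μ-calculus formula in the Kripke structure with
state type `S`, transition relation `R`, and valuation `κ : P → Set S`. -/
def MuForm.sem [DecidableEq P] (R : S → S → Prop) : MuForm P → (P → Set S) → Set S
  | .bot, _ => ∅
  | .top, _ => Set.univ
  | .var p, κ => κ p
  | .nvar p, κ => (κ p)ᶜ
  | .and φ ψ, κ => φ.sem R κ ∩ ψ.sem R κ
  | .or φ ψ, κ => φ.sem R κ ∪ ψ.sem R κ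
  | .box φ, κ => {s | ∀ s', R s s' → s' ∈ φ.sem R κ}
  | .dia φ, κ => {s | ∃ s', R s s' ∧ s' ∈ φ.sem R κ}
  | .mu p φ, κ => ⋂₀ {X : Set S | φ.sem R (Function.update κ p X) ⊆ X}
  | .nu p φ, κ => ⋃₀ {X : Set S | X ⊆ φ.sem R (Function.update κ p X)}
variable [DecidableEq P]

/-- The finite set of subformulas of a μ-calculus formula. -/
def MuForm.subformulas : MuForm P → Finset (MuForm P)
  | .bot => {.bot}
  | .top => {.top}
  | .var p => {.var p}
  | .nvar p => {.nvar p}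
  | .and φ ψ => insert (.and φ ψ) (φ.subformulas ∪ ψ.subformulas)
  | .or φ ψ => insert (.or φ ψ) (φ.subformulas ∪ ψ.subformulas)
  | .box φ => insert (.box φ) φ.subformulas
  | .dia φ => insert (.dia φ) φ.subformulas
  | .mu p φ => insert (.mu p φ) φ.subformulas
  | .nu p φ => insert (.nu p φ) φ.subformulas

/-- Size of a formula (used as a termination measure). -/
def MuForm.fsize : MuForm P → ℕ
  | .bot => 1
  | .top => 1
  | .var _ => 1
  | .nvar _ => 1
  | .and φ ψ => φ.fsize + ψ.fsize + 1
  | .or φ ψ => φ.fsize + ψ.fsize + 1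
  | .box φ => φ.fsize + 1
  | .dia φ => φ.fsize + 1
  | .mu _ φ => φ.fsize + 1
  | .nu _ φ => φ.fsize + 1

theorem MuForm.fsize_le_of_mem_subformulas :
    ∀ {φ ψ : MuForm P}, ψ ∈ φ.subformulas → ψ.fsize ≤ φ.fsize := by
  intro φ
  induction φ with
  | bot => intro ψ h; simp [MuForm.subformulas] at h; subst h; exact le_refl _
  | top => intro ψ h; simp [MuForm.subformulas] at h; subst h; exact le_refl _
  | var p => intro ψ h; simp [MuForm.subformulas] at h; subst h; exact le_refl _
  | nvar p => intro ψ h; simp [MuForm.subformulas] at h; subst h; exact le_refl _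
  | and φ₁ φ₂ ih₁ ih₂ =>
      intro ψ h; simp [MuForm.subformulas] at h
      rcases h with h | h | h
      · subst h; exact le_refl _
      · exact le_trans (ih₁ h) (by simp [MuForm.fsize]; omega)
      · exact le_trans (ih₂ h) (by simp [MuForm.fsize]; omega)
  | or φ₁ φ₂ ih₁ ih₂ =>
      intro ψ h; simp [MuForm.subformulas] at h
      rcases h with h | h | h
      · subst h; exact le_refl _
      · exact le_trans (ih₁ h) (by simp [MuForm.fsize]; omega)
      · exact le_trans (ih₂ h) (by simp [MuForm.fsize]; omega)
  | box φ ih =>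
      intro ψ h; simp [MuForm.subformulas] at h
      rcases h with h | h
      · subst h; exact le_refl _
      · exact le_trans (ih h) (by simp [MuForm.fsize])
  | dia φ ih =>
      intro ψ h; simp [MuForm.subformulas] at h
      rcases h with h | h
      · subst h; exact le_refl _
      · exact le_trans (ih h) (by simp [MuForm.fsize])
  | mu p φ ih =>
      intro ψ h; simp [MuForm.subformulas] at h
      rcases h with h | h
      · subst h; exact le_refl _
      · exact le_trans (ih h) (by simp [MuForm.fsize])
  | nu p φ ih =>
      intro ψ h; simp [MuForm.subformulas] at h
      rcases h with h | h
      · subst h; exact le_refl _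
      · exact le_trans (ih h) (by simp [MuForm.fsize])

open Classical in
/-- The alternation depth `α(φ)` of a μ-calculus formula.  For `μp.ψ` it is the
maximum of `{1, α(ψ)}` together with all values `α(νp'.ψ') + 1` for ν-subformulas
`νp'.ψ'` of `ψ` in which `p` occurs free, and dually for `νp.ψ`. -/
noncomputable def MuForm.alt : MuForm P → ℕ
  | .bot => 0
  | .top => 0
  | .var _ => 0
  | .nvar _ => 0
  | .and φ ψ => max φ.alt ψ.alt
  | .or φ ψ => max φ.alt ψ.alt
  | .box φ => φ.alt
  | .dia φ => φ.alt
  | .mu p φ => max (max 1 φ.alt)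
      (φ.subformulas.attach.sup fun ψ =>
        if (∃ p' ψ', ψ.1 = MuForm.nu p' ψ') ∧ p ∈ ψ.1.freeVars then ψ.1.alt + 1 else 0)
  | .nu p φ => max (max 1 φ.alt)
      (φ.subformulas.attach.sup fun ψ =>
        if (∃ p' ψ', ψ.1 = MuForm.mu p' ψ') ∧ p ∈ ψ.1.freeVars then ψ.1.alt + 1 else 0)
termination_by φ => φ.fsize
decreasing_by
  all_goals simp [MuForm.fsize]
  all_goals try omega
  all_goals
    have := MuForm.fsize_le_of_mem_subformulas ψ.2
    omega

/-- A parity game: vertices `V`, each owned by Player `0` or Player `1`,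
an edge relation `E`, and a priority function `prio` with finite range. -/
structure ParityGame (V : Type*) where
  owner : V → Fin 2
  E : V → V → Prop
  prio : V → ℕ
  finRange : (Set.range prio).Finite

namespace ParityGame

variable {V : Type*} (G : ParityGame V)

/-- A dead end: a vertex without `E`-successor. -/
def DeadEnd (v : V) : Prop := ∀ w, ¬ G.E v w

/-- `π : ℕ → V` is an infinite play (all consecutive steps are edges). -/
def InfPlay (π : ℕ → V) : Prop := ∀ i, G.E (π i) (π (i + 1))

/-- The set of priorities occurring infinitely often along an infinite play. -/
def InfOften (π : ℕ → V) : Set ℕ := {c | ∀ N, ∃ n, N ≤ n ∧ G.prio (π n) = c}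

/-- An infinite play is won by Player `0` iff the maximum priority occurring
infinitely often is even (max-parity condition). -/
def WinInf (π : ℕ → V) : Prop := Even (sSup (G.InfOften π))

/-- `l` is a finite play from `v`: a nonempty list starting at `v`, with
consecutive `E`-edges, whose last vertex is a dead end. -/
def FinPlay (v : V) (l : List V) : Prop :=
  l.head? = some v ∧ l.Chain' G.E ∧ ∀ x ∈ l.getLast?, G.DeadEnd x

/-- A finite play is won by Player `0` iff its last vertex belongs to Player `1`. -/
def WinFin (l : List V) : Prop := ∀ x ∈ l.getLast?, G.owner x = 1

/-- A strategy (for Player `0`) is valid if it assigns to every finite nonempty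
`E`-path ending in a Player-`0` vertex that is not a dead end an `E`-successor
of that vertex. -/
def ValidStrat (σ : List V → V) : Prop :=
  ∀ (l : List V) (x : V), l.Chain' G.E → l.getLast? = some x →
    G.owner x = 0 → ¬ G.DeadEnd x → G.E x (σ l)

/-- An infinite play conforms to a strategy `σ` if every step taken from a
Player-`0` vertex follows `σ` applied to the path traversed so far. -/
def ConformsInf (σ : List V → V) (π : ℕ → V) : Prop :=
  ∀ i, G.owner (π i) = 0 → π (i + 1) = σ (List.ofFn fun j : Fin (i + 1) => π j)

/-- A finite play conforms to a strategy `σ` if every step taken from a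
Player-`0` vertex follows `σ` applied to the path traversed so far. -/
def ConformsFin (σ : List V → V) (l : List V) : Prop :=
  ∀ (i : ℕ) (h : i + 1 < l.length),
    G.owner (l.get ⟨i, Nat.lt_of_succ_lt h⟩) = 0 →
    l.get ⟨i + 1, h⟩ = σ (l.take (i + 1))

/-- `σ` is a winning strategy for Player `0` from `v`: it is a valid strategy
and every (infinite or finite) play from `v` conforming to it is won by
Player `0`. -/
def WinningFrom (σ : List V → V) (v : V) : Prop :=
  G.ValidStrat σ ∧
    (∀ π : ℕ → V, π 0 = v → G.InfPlay π → G.ConformsInf σ π → G.WinInf π) ∧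
    (∀ l : List V, G.FinPlay v l → G.ConformsFin σ l → G.WinFin l)

/-- Player `0` wins the game from `v` if some strategy is winning for
Player `0` from `v`. -/
def Wins0 (v : V) : Prop := ∃ σ : List V → V, G.WinningFrom σ v

/-- A strategy is memoryless if its value depends only on the last vertex of
the path. -/
def Memoryless (σ : List V → V) : Prop :=
  ∀ (l l' : List V) (x : V), l.getLast? = some x → l'.getLast? = some x → σ l = σ l'

end ParityGame

theorem MuForm.self_mem_subformulas (φ : MuForm P) : φ ∈ φ.subformulas := by
  cases φ <;> simp [MuForm.subformulas]

/-- `p` is bound in `φ`: some fixpoint subformula of `φ` binds `p`. -/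
def MuForm.BoundIn (p : P) (φ : MuForm P) : Prop :=
  ∃ ψ, MuForm.mu p ψ ∈ φ.subformulas ∨ MuForm.nu p ψ ∈ φ.subformulas

/-- `φ` is in normal form: every variable is bound by at most one fixpoint
operator occurring in `φ` (the fixpoint subformula binding a given variable is
unique), and no variable occurs both free and bound in `φ`. -/
def MuForm.NormalForm (φ : MuForm P) : Prop :=
  (∀ (p : P) (χ₁ χ₂ : MuForm P), χ₁ ∈ φ.subformulas → χ₂ ∈ φ.subformulas →
      (∃ ψ, χ₁ = MuForm.mu p ψ ∨ χ₁ = MuForm.nu p ψ) →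
      (∃ ψ, χ₂ = MuForm.mu p ψ ∨ χ₂ = MuForm.nu p ψ) → χ₁ = χ₂) ∧
    ∀ p ∈ φ.freeVars, ¬ MuForm.BoundIn p φ

/-- The vertices `(ψ, s)` of the model-checking game for `φ` that belong to
Player `0`: `ψ` is `⊥`, a disjunction, a `◇`-formula, a `μ`- or `ν`-formula, a
variable bound in `φ`, a variable `p` free in `φ` with `s ∉ κ p`, or a literal
`¬p` with `s ∈ κ p`. -/
def mcPlayer0 (φ : MuForm P) (κ : P → Set S) : MuForm P × S → Prop :=
  fun v => match v.1 with
  | .bot => True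
  | .top => False
  | .var p => MuForm.BoundIn p φ ∨ (p ∈ φ.freeVars ∧ v.2 ∉ κ p)
  | .nvar p => v.2 ∈ κ p
  | .and _ _ => False
  | .or _ _ => True
  | .box _ => False
  | .dia _ => True
  | .mu _ _ => True
  | .nu _ _ => True

/-- The edges of the model-checking game for `φ`: from `(ψ₁∧ψ₂, s)` and
`(ψ₁∨ψ₂, s)` to `(ψ₁, s)` and `(ψ₂, s)`; from `(□ψ, s)` and `(◇ψ, s)` to
`(ψ, s')` for every `s'` with `R s s'`; from `(μp.ψ, s)` and `(νp.ψ, s)` to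
`(ψ, s)`; from `(p, s)` to `(φ_p, s)` where `φ_p` is the fixpoint subformula of
`φ` binding `p`; no edges from `(⊥, s)`, `(⊤, s)`, `(¬p, s)`, or `(p, s)` with
`p` free in `φ`. -/
def mcEdge (R : S → S → Prop) (φ : MuForm P) :
    MuForm P × S → MuForm P × S → Prop :=
  fun v w => match v.1 with
  | .bot => False
  | .top => False
  | .var p => w.2 = v.2 ∧ w.1 ∈ φ.subformulas ∧
      ∃ ψ, w.1 = MuForm.mu p ψ ∨ w.1 = MuForm.nu p ψ
  | .nvar _ => False
  | .and ψ₁ ψ₂ => w.2 = v.2 ∧ (w.1 = ψ₁ ∨ w.1 = ψ₂)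
  | .or ψ₁ ψ₂ => w.2 = v.2 ∧ (w.1 = ψ₁ ∨ w.1 = ψ₂)
  | .box ψ => w.1 = ψ ∧ R v.2 w.2
  | .dia ψ => w.1 = ψ ∧ R v.2 w.2
  | .mu _ ψ => w.2 = v.2 ∧ w.1 = ψ
  | .nu _ ψ => w.2 = v.2 ∧ w.1 = ψ

/-- The priority of a vertex `(ψ, s)` of the model-checking game:
`2⌈α(ψ)/2⌉ − 1` if `ψ` is a `μ`-formula with `α(ψ) > 0`, `2⌊α(ψ)/2⌋` if `ψ` is
a `ν`-formula with `α(ψ) > 0`, and `0` otherwise. -/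
noncomputable def mcPrio : MuForm P → ℕ
  | .mu p ψ => if 0 < (MuForm.mu p ψ).alt then 2 * (((MuForm.mu p ψ).alt + 1) / 2) - 1 else 0
  | .nu p ψ => if 0 < (MuForm.nu p ψ).alt then 2 * ((MuForm.nu p ψ).alt / 2) else 0
  | _ => 0

open Classical in
/-- The model-checking parity game `G(φ)` for a μ-calculus formula `φ` (in
normal form), a Kripke structure with transition relation `R`, and a valuation
`κ`: its vertices are the pairs `(ψ, s)` with `ψ` a subformula of `φ` and `s`
a state. -/
noncomputable def mcGame (R : S → S → Prop) (φ : MuForm P) (κ : P → Set S) :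
    ParityGame ({ψ : MuForm P // ψ ∈ φ.subformulas} × S) where
  owner := fun v => if mcPlayer0 φ κ (v.1.1, v.2) then 0 else 1
  E := fun v w => mcEdge R φ (v.1.1, v.2) (w.1.1, w.2)
  prio := fun v => mcPrio v.1.1
  finRange := by
    have h : (Set.range fun ψ : {ψ : MuForm P // ψ ∈ φ.subformulas} =>
        mcPrio ψ.1).Finite := Set.finite_range _
    exact h.subset (by rintro _ ⟨v, rfl⟩; exact ⟨v.1, rfl⟩)

theorem MuForm.left_mem_subformulas_or (ψ₁ ψ₂ : MuForm P) :
    ψ₁ ∈ (MuForm.or ψ₁ ψ₂).subformulas := by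
  simp [MuForm.subformulas, MuForm.self_mem_subformulas]

theorem MuForm.right_mem_subformulas_or (ψ₁ ψ₂ : MuForm P) :
    ψ₂ ∈ (MuForm.or ψ₁ ψ₂).subformulas := by
  simp [MuForm.subformulas, MuForm.self_mem_subformulas]

namespace MCAux

theorem getLast?_take_succ {α : Type*} (l : List α) (i : ℕ) (h : i < l.length) :
    (l.take (i+1)).getLast? = some l[i] := by
  rw [List.getLast?_eq_getElem?]
  have hlen : (l.take (i+1)).length = i + 1 := by
    simp [List.length_take]; omega
  rw [hlen]
  simp only [Nat.add_sub_cancel]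
  rw [List.getElem?_take]
  simp [Nat.lt_succ_self, List.getElem?_eq_getElem h]

theorem chain_get {α : Type*} {R : α → α → Prop} {l : List α} (hc : l.Chain' R)
    {i : ℕ} (h : i + 1 < l.length) : R l[i] l[i+1] := by
  have := List.isChain_iff_getElem.mp hc i (by omega)
  simpa using this

theorem prop_along {α : Type*} {R : α → α → Prop} {Q : α → Prop} :
    ∀ {l : List α}, l.Chain' R → (∀ a ∈ l.head?, Q a) →
      (∀ x y, Q x → R x y → Q y) → ∀ x ∈ l, Q x := by
  intro l
  induction l with
  | nil => intro _ _ _ x hx; simp at hx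
  | cons a t ih =>
      intro hc hh hstep x hx
      rw [List.Chain', List.isChain_cons] at hc
      have hQa : Q a := hh a (by simp)
      rcases List.mem_cons.mp hx with rfl | hx
      · exact hQa
      · exact ih hc.2 (fun b hb => hstep a b hQa (hc.1 b hb)) hstep x hx

theorem ofFn_chain {α : Type*} {R : α → α → Prop} {π : ℕ → α}
    (hπ : ∀ i, R (π i) (π (i+1))) (n : ℕ) :
    (List.ofFn fun j : Fin n => π j).Chain' R := by
  rw [List.Chain', List.isChain_iff_getElem]
  intro i h
  simp at h ⊢
  have h1 : i < n := by omega
  have h2 : i + 1 < n := by omega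
  simpa [List.get_ofFn, h1, h2] using hπ i

theorem ofFn_getLast? {α : Type*} (π : ℕ → α) (n : ℕ) :
    (List.ofFn fun j : Fin (n+1) => π j).getLast? = some (π n) := by
  rw [List.ofFn_succ']
  simp [List.concat_eq_append]

theorem ofFn_tail {α : Type*} (π : ℕ → α) (n : ℕ) :
    (List.ofFn fun j : Fin (n+1) => π j).tail = List.ofFn fun j : Fin n => π (j+1) := by
  rw [List.ofFn_succ]
  simp

theorem ofFn_head_cons {α : Type*} (π : ℕ → α) (n : ℕ) :
    (List.ofFn fun j : Fin (n+1) => π j) = π 0 :: List.ofFn fun j : Fin n => π (j+1) := by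
  rw [List.ofFn_succ]
  simp


end MCAux

namespace MCAux
open ParityGame

variable {V V' : Type*}

theorem infOften_eq_of_prio (G : ParityGame V) (G' : ParityGame V') (π : ℕ → V) (π' : ℕ → V')
    (h : ∀ n, G'.prio (π' n) = G.prio (π n)) : G'.InfOften π' = G.InfOften π := by
  ext c
  constructor <;> intro hc N <;> obtain ⟨n, hn, he⟩ := hc N
  · exact ⟨n, hn, by rw [← h n]; exact he⟩
  · exact ⟨n, hn, by rw [h n]; exact he⟩

theorem infOften_shift (G : ParityGame V) (π' π : ℕ → V) (h : ∀ n, π' (n+1) = π n) :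
    G.InfOften π' = G.InfOften π := by
  ext c
  constructor
  · intro hc N
    obtain ⟨n, hn, he⟩ := hc (N+1)
    refine ⟨n-1, by omega, ?_⟩
    have hn1 : n - 1 + 1 = n := by omega
    rw [← hn1, h (n-1)] at he
    exact he
  · intro hc N
    obtain ⟨n, hn, he⟩ := hc N
    exact ⟨n+1, by omega, by rw [h n]; exact he⟩

theorem wins0_pullback (G : ParityGame V) (G' : ParityGame V') (f : V → V')
    (howner : ∀ u, G'.owner (f u) = G.owner u)
    (hprio : ∀ u, G'.prio (f u) = G.prio u)
    (hedge : ∀ u w, G.E u w ↔ G'.E (f u) (f w))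
    (hclosed : ∀ u w', G'.E (f u) w' → ∃ w, f w = w')
    (v : V) (hw : G'.Wins0 (f v)) : G.Wins0 v := by
  classical
  obtain ⟨σ', hvalid', hinf', hfin'⟩ := hw
  set σ : List V → V := fun l => if h : ∃ w, f w = σ' (l.map f) then h.choose else v with hσdef
  have hdead : ∀ x, G.DeadEnd x ↔ G'.DeadEnd (f x) := by
    intro x
    constructor
    · intro hd w' he'
      obtain ⟨w, rfl⟩ := hclosed x w' he'
      exact hd w ((hedge x w).mpr he')
    · intro hd w he
      exact hd (f w) ((hedge x w).mp he)
  have hkey : ∀ (l : List V) (x : V), l.Chain' G.E → l.getLast? = some x →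
      G.owner x = 0 → ¬ G.DeadEnd x → f (σ l) = σ' (l.map f) ∧ G.E x (σ l) := by
    intro l x hc hl ho hd
    have hc' : (l.map f).Chain' G'.E :=
      (List.isChain_map f).mpr (hc.imp fun a b => (hedge a b).mp)
    have hl' : (l.map f).getLast? = some (f x) := by rw [List.getLast?_map, hl]; rfl
    have ho' : G'.owner (f x) = 0 := by rw [howner]; exact ho
    have hd' : ¬ G'.DeadEnd (f x) := fun h => hd ((hdead x).mpr h)
    have hE' := hvalid' (l.map f) (f x) hc' hl' ho' hd'
    have hex : ∃ w, f w = σ' (l.map f) := hclosed x _ hE'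
    have hfσ : f (σ l) = σ' (l.map f) := by
      simp only [hσdef]; rw [dif_pos hex]; exact hex.choose_spec
    refine ⟨hfσ, (hedge x (σ l)).mpr ?_⟩
    rw [hfσ]; exact hE'
  refine ⟨σ, fun l x hc hl ho hd => (hkey l x hc hl ho hd).2, ?_, ?_⟩
  · intro π h0 hplay hconf
    have h0' : (fun n => f (π n)) 0 = f v := by simp [h0]
    have hplay' : G'.InfPlay (fun n => f (π n)) := fun i => (hedge _ _).mp (hplay i)
    have hconf' : G'.ConformsInf σ' (fun n => f (π n)) := by
      intro i ho'
      have ho : G.owner (π i) = 0 := by rw [← howner (π i)]; exact ho'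
      have hk := hkey (List.ofFn fun j : Fin (i+1) => π j) (π i)
        (ofFn_chain hplay (i+1)) (ofFn_getLast? π i) ho (fun hd => hd (π (i+1)) (hplay i))
      show f (π (i+1)) = σ' (List.ofFn fun j : Fin (i+1) => f (π j))
      rw [hconf i ho, hk.1, List.map_ofFn]
      rfl
    have hwin := hinf' _ h0' hplay' hconf'
    unfold ParityGame.WinInf at hwin ⊢
    rwa [infOften_eq_of_prio G G' π (fun n => f (π n)) (fun n => hprio (π n))] at hwin
  · intro l hfp hconf
    obtain ⟨hh, hc, hlast⟩ := hfp
    have hfp' : G'.FinPlay (f v) (l.map f) := by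
      refine ⟨by rw [List.head?_map, hh]; rfl,
        (List.isChain_map f).mpr (hc.imp fun a b => (hedge a b).mp), ?_⟩
      intro x' hx'
      rw [List.getLast?_map] at hx'
      cases hgl : l.getLast? with
      | none => rw [hgl] at hx'; simp at hx'
      | some x =>
          rw [hgl] at hx'
          simp at hx'
          rw [← hx']
          exact (hdead x).mp (hlast x (by rw [hgl]; rfl))
    have hconf' : G'.ConformsFin σ' (l.map f) := by
      intro i h ho'
      have hi1 : i + 1 < l.length := by simpa using h
      have hget : ∀ (j : ℕ) (hj : j < l.length),
          (l.map f).get ⟨j, by simpa using hj⟩ = f l[j] := by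
        intro j hj; simp
      rw [hget i (by omega)] at ho'
      have ho : G.owner l[i] = 0 := by rw [← howner]; exact ho'
      have hstep := hconf i hi1 ho
      have hk := hkey (l.take (i+1)) l[i] (hc.take (i+1)) (getLast?_take_succ l i (by omega))
        ho (fun hd => hd l[i+1] (chain_get hc hi1))
      rw [hget (i+1) hi1]
      simp only [List.get_eq_getElem] at hstep
      rw [hstep, ← List.map_take, ← hk.1]
    have hwin := hfin' (l.map f) hfp' hconf'
    intro x hx
    have hx' : f x ∈ (l.map f).getLast? := by
      rw [List.getLast?_map]
      simp at hx
      rw [hx]; rfl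
    have := hwin (f x) hx'
    rwa [howner] at this

theorem mem_of_getLast?' {α} {l : List α} {x : α} (h : l.getLast? = some x) : x ∈ l := by
  rw [List.getLast?_eq_getElem?] at h
  exact List.mem_of_getElem? h

theorem wins0_pushforward (G : ParityGame V) (G' : ParityGame V') (f : V → V')
    (hinj : Function.Injective f)
    (howner : ∀ u, G'.owner (f u) = G.owner u)
    (hprio : ∀ u, G'.prio (f u) = G.prio u)
    (hedge : ∀ u w, G.E u w ↔ G'.E (f u) (f w))
    (hclosed : ∀ u w', G'.E (f u) w' → ∃ w, f w = w')
    (v : V) (hw : G.Wins0 v) : G'.Wins0 (f v) := by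
  classical
  obtain ⟨σ, hvalid, hinf, hfin⟩ := hw
  set g : V' → V := fun w' => if h : ∃ w, f w = w' then h.choose else v with hgdef
  have hfg : ∀ x, (∃ w, f w = x) → f (g x) = x := by
    intro x hx
    simp only [hgdef]
    rw [dif_pos hx]
    exact hx.choose_spec
  have hgf : ∀ w, g (f w) = w := fun w => hinj (hfg (f w) ⟨w, rfl⟩)
  set σ' : List V' → V' := fun l' =>
    if h : ∀ x ∈ l', ∃ w, f w = x then f (σ (l'.map g))
    else if h2 : ∃ w', ∃ x, l'.getLast? = some x ∧ G'.E x w' then h2.choose else f v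
    with hσ'def
  have hcg : ∀ l' : List V', l'.Chain' G'.E → (∀ x ∈ l', ∃ w, f w = x) →
      (l'.map g).Chain' G.E := by
    intro l' hc' hall
    rw [List.Chain', List.isChain_iff_getElem]
    intro i hlt
    simp only [List.length_map] at hlt
    simp only [List.get_eq_getElem, List.getElem_map]
    apply (hedge _ _).mpr
    rw [hfg _ (hall _ (List.getElem_mem (by omega))), hfg _ (hall _ (List.getElem_mem (by omega)))]
    exact chain_get hc' (by omega)
  have hkey : ∀ (l' : List V') (x' : V'), l'.Chain' G'.E → l'.getLast? = some x' →
      G'.owner x' = 0 → ¬ G'.DeadEnd x' → (∀ x ∈ l', ∃ w, f w = x) →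
      σ' l' = f (σ (l'.map g)) ∧ G'.E x' (σ' l') := by
    intro l' x' hc' hl' ho' hd' hall
    have hx'mem : ∃ w, f w = x' := hall x' (mem_of_getLast?' hl')
    have hfgx : f (g x') = x' := hfg x' hx'mem
    have hlg : (l'.map g).getLast? = some (g x') := by rw [List.getLast?_map, hl']; rfl
    have ho : G.owner (g x') = 0 := by rw [← howner (g x'), hfgx]; exact ho'
    have hd : ¬ G.DeadEnd (g x') := by
      intro hd
      apply hd'
      intro w' he'
      obtain ⟨w, rfl⟩ := hclosed (g x') w' (by rw [hfgx]; exact he')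
      exact hd w ((hedge _ _).mpr (by rw [hfgx]; exact he'))
    have hE := hvalid (l'.map g) (g x') (hcg l' hc' hall) hlg ho hd
    have hσ'eq : σ' l' = f (σ (l'.map g)) := by simp only [hσ'def]; rw [dif_pos hall]
    refine ⟨hσ'eq, ?_⟩
    rw [hσ'eq, ← hfgx]
    exact (hedge _ _).mp hE
  refine ⟨σ', ?_, ?_, ?_⟩
  · -- validity
    intro l' x' hc' hl' ho' hd'
    by_cases hall : ∀ x ∈ l', ∃ w, f w = x
    · exact (hkey l' x' hc' hl' ho' hd' hall).2
    · rw [ParityGame.DeadEnd] at hd'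
      push_neg at hd'
      obtain ⟨w', he'⟩ := hd'
      have h2 : ∃ w', ∃ x, l'.getLast? = some x ∧ G'.E x w' := ⟨w', x', hl', he'⟩
      have hσ'eq : σ' l' = h2.choose := by
        simp only [hσ'def]; rw [dif_neg hall, dif_pos h2]
      obtain ⟨x'', hx'', he''⟩ := h2.choose_spec
      rw [hl'] at hx''
      rw [hσ'eq, Option.some.inj hx'']
      exact he''
  · -- infinite plays
    intro π' h0' hplay' hconf'
    have hrange : ∀ i, ∃ w, f w = π' i := by
      intro i
      induction i with
      | zero => exact ⟨v, h0'.symm⟩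
      | succ i ih =>
          obtain ⟨w, hw⟩ := ih
          exact hclosed w _ (hw ▸ hplay' i)
    set π : ℕ → V := fun n => g (π' n) with hπdef
    have hfπ : ∀ n, f (π n) = π' n := fun n => hfg _ (hrange n)
    have h0 : π 0 = v := by simp only [hπdef]; rw [h0', hgf]
    have hplay : G.InfPlay π := by
      intro i
      apply (hedge _ _).mpr
      rw [hfπ, hfπ]
      exact hplay' i
    have hconf : G.ConformsInf σ π := by
      intro i ho
      have ho' : G'.owner (π' i) = 0 := by rw [← hfπ i, howner]; exact ho
      have hstep := hconf' i ho'
      have hk := hkey (List.ofFn fun j : Fin (i+1) => π' j) (π' i)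
        (ofFn_chain hplay' (i+1)) (ofFn_getLast? π' i) ho'
        (fun hd => hd (π' (i+1)) (hplay' i))
        (by intro x hx
            rw [List.mem_ofFn] at hx
            obtain ⟨j, rfl⟩ := hx
            exact hrange j)
      apply hinj
      rw [hfπ, hstep, hk.1, List.map_ofFn]
      rfl
    have hwin := hinf π h0 hplay hconf
    unfold ParityGame.WinInf at hwin ⊢
    rwa [infOften_eq_of_prio G G' π π' (fun n => by rw [← hfπ n, hprio])]
  · -- finite plays
    intro l' hfp' hconf'
    obtain ⟨hh', hc', hlast'⟩ := hfp'
    have hall : ∀ x ∈ l', ∃ w, f w = x := by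
      refine prop_along (Q := fun x => ∃ w, f w = x) hc' (fun a ha => ?_) (fun x y hx hxy => ?_)
      · rw [hh'] at ha; simp at ha; exact ⟨v, ha⟩
      · obtain ⟨w, rfl⟩ := hx; exact hclosed w y hxy
    set l : List V := l'.map g with hldef
    have hmapfl : l.map f = l' := by
      simp only [hldef, List.map_map]
      exact (List.map_congr_left (fun a ha => hfg a (hall a ha))).trans (List.map_id _)
    have hlen : l.length = l'.length := by simp [hldef]
    have hgetl : ∀ (j : ℕ) (hj : j < l'.length), l[j]'(by omega) = g (l'[j]) := by
      intro j hj; simp [hldef]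
    have hfp : G.FinPlay v l := by
      refine ⟨?_, hcg l' hc' hall, ?_⟩
      · simp only [hldef]; rw [List.head?_map, hh']; simp [hgf]
      · intro x hx
        simp only [hldef, List.getLast?_map] at hx
        cases hgl : l'.getLast? with
        | none => rw [hgl] at hx; simp at hx
        | some x' =>
            rw [hgl] at hx
            simp at hx
            intro w he
            have hfgx : f (g x') = x' := hfg x' (hall x' (mem_of_getLast?' hgl))
            have := (hedge _ _).mp (hx ▸ he)
            rw [hfgx] at this
            exact hlast' x' (by rw [hgl]; rfl) (f w) this
    have hconf : G.ConformsFin σ l := by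
      intro i h ho
      have hi1 : i + 1 < l'.length := by omega
      simp only [List.get_eq_getElem] at ho ⊢
      rw [hgetl i (by omega)] at ho
      have hfgi : f (g (l'[i])) = l'[i] := hfg _ (hall _ (List.getElem_mem _))
      have ho' : G'.owner (l'[i]'(by omega)) = 0 := by rw [← hfgi, howner]; exact ho
      have hstep := hconf' i (by omega) (by simp only [List.get_eq_getElem]; exact ho')
      have hk := hkey (l'.take (i+1)) (l'[i]'(by omega)) (hc'.take (i+1))
        (getLast?_take_succ l' i (by omega)) ho'
        (fun hd => hd (l'[i+1]'(by omega)) (chain_get hc' hi1))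
        (fun x hx => hall x (List.mem_of_mem_take hx))
      simp only [List.get_eq_getElem] at hstep
      rw [hgetl (i+1) (by omega), hstep, hk.1]
      have : (l'.take (i+1)).map g = l.take (i+1) := by
        simp only [hldef]; rw [List.map_take]
      rw [this, hgf]
    have hwin := hfin l hfp hconf
    intro x' hx'
    simp at hx'
    have hglast : l.getLast? = some (g x') := by
      simp only [hldef]; rw [List.getLast?_map, hx']; rfl
    have := hwin (g x') (by rw [hglast]; rfl)
    rw [← howner (g x'), hfg x' (hall x' (mem_of_getLast?' hx'))] at this
    exact this

open Classical in
noncomputable def anySucc (G : ParityGame V) (d : V) (l : List V) : V :=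
  if h : ∃ w, ∃ x, l.getLast? = some x ∧ G.E x w then h.choose else d

theorem anySucc_spec (G : ParityGame V) (d : V) (l : List V) (x : V)
    (hl : l.getLast? = some x) (hd : ¬ G.DeadEnd x) : G.E x (anySucc G d l) := by
  rw [ParityGame.DeadEnd] at hd
  push_neg at hd
  obtain ⟨w, hw⟩ := hd
  have h : ∃ w, ∃ x, l.getLast? = some x ∧ G.E x w := ⟨w, x, hl, hw⟩
  rw [anySucc, dif_pos h]
  obtain ⟨x', hx', he'⟩ := h.choose_spec
  rw [hl] at hx'
  rw [Option.some.inj hx']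
  exact he'

theorem getLast?_cons_of_ne_nil {α} (a : α) {l : List α} (h : l ≠ []) :
    (a :: l).getLast? = l.getLast? := by
  cases l with
  | nil => exact absurd rfl h
  | cons b t => exact List.getLast?_cons_cons

theorem head?_take_succ {α} (l : List α) (n : ℕ) : (l.take (n+1)).head? = l.head? := by
  cases l <;> simp

theorem wins0_unstep (G : ParityGame V) (v : V) (σ' : List V → V)
    (hov : G.owner v = 0) (hnd : ¬ G.DeadEnd v)
    (hσ' : G.WinningFrom σ' v) : G.Wins0 (σ' [v]) := by
  classical
  obtain ⟨hvalid', hinf', hfin'⟩ := hσ'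
  set a := σ' [v] with hadef
  have hva : G.E v a := hvalid' [v] v (by simp [List.Chain']) (by simp) hov hnd
  set σ : List V → V := fun l =>
    if (v :: l).Chain' G.E then σ' (v :: l) else anySucc G v l with hσdef
  refine ⟨σ, ?_, ?_, ?_⟩
  · intro l x hc hl ho hd
    by_cases h : (v :: l).Chain' G.E
    · have hne : l ≠ [] := by intro h'; subst h'; simp at hl
      have hlast : (v :: l).getLast? = some x := by
        rw [getLast?_cons_of_ne_nil v hne]; exact hl
      have := hvalid' (v :: l) x h hlast ho hd
      simpa [hσdef, h] using this
    · have : σ l = anySucc G v l := by simp [hσdef, h]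
      rw [this]
      exact anySucc_spec G v l x hl hd
  · intro π h0 hplay hconf
    set π' : ℕ → V := fun n => match n with | 0 => v | n+1 => π n with hπ'def
    have hπ'0 : π' 0 = v := rfl
    have hπ's : ∀ n, π' (n+1) = π n := fun n => rfl
    have hplay' : G.InfPlay π' := by
      intro i
      cases i with
      | zero => rw [hπ'0, hπ's, h0]; exact hva
      | succ i => rw [hπ's, hπ's]; exact hplay i
    have hchaincons : ∀ i, ((v :: List.ofFn fun j : Fin (i+1) => π j)).Chain' G.E := by
      intro i
      rw [List.Chain', List.isChain_cons]
      refine ⟨?_, ofFn_chain hplay (i+1)⟩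
      intro y hy
      rw [ofFn_head_cons] at hy
      simp at hy
      rw [← hy, h0]
      exact hva
    have hconf' : G.ConformsInf σ' π' := by
      intro i ho'
      cases i with
      | zero =>
          rw [hπ's, h0, hadef]
          congr 1
      | succ i =>
          rw [hπ's] at ho' ⊢
          have hstep := hconf i ho'
          have hl : (List.ofFn fun j : Fin (i+1+1) => π' j) =
              v :: List.ofFn fun j : Fin (i+1) => π j := by
            rw [ofFn_head_cons]
          rw [hl, hstep, hσdef]
          simp only [if_pos (hchaincons i)]
    have hwin := hinf' π' hπ'0 hplay' hconf'
    unfold ParityGame.WinInf at hwin ⊢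
    rwa [infOften_shift G π' π hπ's] at hwin
  · intro l hfp hconf
    obtain ⟨hh, hc, hlast⟩ := hfp
    have hlne : l ≠ [] := by intro h'; subst h'; simp at hh
    have hfp' : G.FinPlay v (v :: l) := by
      refine ⟨rfl, ?_, ?_⟩
      · rw [List.Chain', List.isChain_cons]
        exact ⟨fun y hy => by rw [hh] at hy; simp at hy; rw [← hy]; exact hva, hc⟩
      · rw [getLast?_cons_of_ne_nil v hlne]; exact hlast
    have hconf' : G.ConformsFin σ' (v :: l) := by
      intro i h ho'
      cases i with
      | zero =>
          simp only [List.get_eq_getElem] at ho' ⊢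
          have hget1 : (v :: l)[1]'(by simpa using h) = l[0]'(by simp at h; omega) := rfl
          rw [hget1]
          have hl0 : l[0]'(by simp at h; omega) = a := by
            cases l with
            | nil => simp at hh
            | cons b t => simp at hh; simp [hh]
          rw [hl0, hadef]
          congr 1
      | succ i =>
          simp only [List.get_eq_getElem] at ho' ⊢
          have hi1 : i + 1 < l.length := by simpa using h
          have hgeti : (v :: l)[i+1]'(by simp; omega) = l[i]'(by omega) := rfl
          rw [hgeti] at ho'
          have hstep := hconf i hi1 (by simpa using ho')
          simp only [List.get_eq_getElem] at hstep
          have hget2 : (v :: l)[i+2]'(by simp; omega) = l[i+1]'(hi1) := rfl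
          rw [hget2, hstep]
          have htake : (v :: l).take (i+2) = v :: l.take (i+1) := rfl
          rw [htake, hσdef]
          have hchain : (v :: l.take (i+1)).Chain' G.E := by
            rw [List.Chain', List.isChain_cons]
            refine ⟨?_, hc.take (i+1)⟩
            intro y hy
            rw [head?_take_succ, hh] at hy
            simp at hy
            rw [← hy]
            exact hva
          simp only [if_pos hchain]
    have hwin := hfin' (v :: l) hfp' hconf'
    intro x hx
    exact hwin x (by rw [getLast?_cons_of_ne_nil v hlne]; exact hx)

theorem wins0_step (G : ParityGame V) (v a : V)
    (hov : G.owner v = 0) (hva : G.E v a) (hnopred : ∀ w, ¬ G.E w v)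
    (hw : G.Wins0 a) : G.Wins0 v := by
  classical
  obtain ⟨σ, hvalid, hinf, hfin⟩ := hw
  set σ' : List V → V := fun l =>
    if l.getLast? = some v then a
    else if l.head? = some v ∧ 1 < l.length then σ l.tail else anySucc G v l with hσ'def
  have hσ'v : σ' [v] = a := by simp [hσ'def]
  refine ⟨σ', ?_, ?_, ?_⟩
  · intro l x hc hl ho hd
    by_cases h1 : l.getLast? = some v
    · have hxv : x = v := by rw [hl] at h1; exact Option.some.inj h1
      have : σ' l = a := by simp [hσ'def, h1]
      rw [this, hxv]
      exact hva
    · by_cases h2 : l.head? = some v ∧ 1 < l.length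
      · have hσ'l : σ' l = σ l.tail := by simp [hσ'def, h1, h2]
        cases l with
        | nil => simp at hl
        | cons b t =>
            have hbv : b = v := by simpa using h2.1
            have htne : t ≠ [] := by
              intro h'; subst h'; exact absurd h2.2 (by simp)
            have htc : t.Chain' G.E := (List.isChain_cons.mp hc).2
            have htl : t.getLast? = some x := by
              rw [← getLast?_cons_of_ne_nil b htne]; exact hl
            have := hvalid t x htc htl ho hd
            simpa [hσ'l] using this
      · have : σ' l = anySucc G v l := by simp [hσ'def, h1, h2]
        rw [this]
        exact anySucc_spec G v l x hl hd
  · intro π' h0' hplay' hconf'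
    have hπ'1 : π' 1 = a := by
      have := hconf' 0 (by rw [h0']; exact hov)
      rw [this]
      have : (List.ofFn fun j : Fin 1 => π' j) = [v] := by simp [h0']
      rw [this, hσ'v]
    have hnotv : ∀ n, π' (n+1) ≠ v := fun n h => hnopred (π' n) (h ▸ hplay' n)
    set π : ℕ → V := fun n => π' (n+1) with hπdef
    have hplay : G.InfPlay π := fun i => hplay' (i+1)
    have h0 : π 0 = a := hπ'1
    have hconf : G.ConformsInf σ π := by
      intro i ho
      have hstep := hconf' (i+1) ho
      have hL : (List.ofFn fun j : Fin (i+2) => π' j).getLast? = some (π' (i+1)) :=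
        ofFn_getLast? π' (i+1)
      have hne : ¬ (List.ofFn fun j : Fin (i+2) => π' j).getLast? = some v := by
        rw [hL]
        intro h
        exact hnotv i (Option.some.inj h)
      have hhead : (List.ofFn fun j : Fin (i+2) => π' j).head? = some v := by
        rw [ofFn_head_cons]
        simp [h0']
      have hlen : 1 < (List.ofFn fun j : Fin (i+2) => π' j).length := by simp
      have hσ'L : σ' (List.ofFn fun j : Fin (i+2) => π' j) =
          σ (List.ofFn fun j : Fin (i+2) => π' j).tail := by
        simp only [hσ'def]
        rw [if_neg hne, if_pos ⟨hhead, hlen⟩]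
      show π' (i+1+1) = σ (List.ofFn fun j : Fin (i+1) => π' (j+1))
      rw [hstep, hσ'L, ofFn_tail]
    have hwin := hinf π h0 hplay hconf
    unfold ParityGame.WinInf at hwin ⊢
    rw [infOften_shift G π' π (fun n => rfl)]
    exact hwin
  · intro l' hfp' hconf'
    obtain ⟨hh', hc', hlast'⟩ := hfp'
    cases l' with
    | nil => simp at hh'
    | cons b t =>
        have hbv : b = v := by simpa using hh'
        subst hbv
        cases t with
        | nil =>
            exfalso
            have : G.DeadEnd b := hlast' b (by simp)
            exact this a hva
        | cons c t =>
            have hc1 : c = a := by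
              have := hconf' 0 (by simp) (by simpa using hov)
              simp only [List.get_eq_getElem] at this
              have htake : (b :: c :: t).take 1 = [b] := rfl
              rw [htake] at this
              simpa [hσ'v] using this
            subst hc1
            have htc : (c :: t).Chain' G.E := (List.isChain_cons.mp hc').2
            have hfp : G.FinPlay c (c :: t) := by
              refine ⟨rfl, htc, ?_⟩
              intro x hx
              exact hlast' x (by rw [getLast?_cons_of_ne_nil b (by simp)]; exact hx)
            have hnotv2 : ∀ (i : ℕ) (hi : i < t.length + 1),
                (c :: t)[i]'(by simpa using hi) ≠ b := by
              intro i hi h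
              have he : G.E ((b :: c :: t)[i]'(by simp; omega))
                  ((b :: c :: t)[i+1]'(by simp; omega)) :=
                chain_get hc' (by simp; omega)
              have hgg : (b :: c :: t)[i+1]'(by simp; omega) = (c :: t)[i]'(by simpa using hi) := rfl
              rw [hgg, h] at he
              exact hnopred _ he
            have hconf : G.ConformsFin σ (c :: t) := by
              intro i h ho
              have hilen : i + 1 < t.length + 1 := by simpa using h
              simp only [List.get_eq_getElem] at ho ⊢
              have hstep := hconf' (i+1) (by simp; omega)
                (by simp only [List.get_eq_getElem]; exact ho)
              simp only [List.get_eq_getElem] at hstep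
              have hg1 : (b :: c :: t)[i+2]'(by simp; omega) = (c :: t)[i+1]'h := rfl
              rw [hg1] at hstep
              rw [hstep]
              have htake : (b :: c :: t).take (i+2) = b :: (c :: t).take (i+1) := rfl
              rw [htake]
              have hne : ¬ (b :: (c :: t).take (i+1)).getLast? = some b := by
                have htne : (c :: t).take (i+1) ≠ [] := by
                  intro hcon
                  have := congrArg List.length hcon
                  simp at this
                rw [getLast?_cons_of_ne_nil b htne]
                rw [getLast?_take_succ (c :: t) i (by simp; omega)]
                intro hcon
                exact hnotv2 i (by omega) (Option.some.inj hcon)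
              have hlen2 : 1 < (b :: (c :: t).take (i+1)).length := by
                simp [List.length_take]
              have hσ'eq : σ' (b :: (c :: t).take (i+1)) = σ ((c :: t).take (i+1)) := by
                simp only [hσ'def]
                rw [if_neg hne, if_pos ⟨by simp, hlen2⟩]
                rfl
              rw [hσ'eq]
            have hwin := hfin (c :: t) hfp hconf
            intro x hx
            exact hwin x (by rw [getLast?_cons_of_ne_nil b (by simp)] at hx; exact hx)
end MCAux

namespace MCAux
variable {P S : Type*} [DecidableEq P]

theorem fsize_pos (θ : MuForm P) : 0 < θ.fsize := by
  cases θ <;> simp [MuForm.fsize]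

theorem subformulas_trans : ∀ {φ θ : MuForm P}, θ ∈ φ.subformulas →
    θ.subformulas ⊆ φ.subformulas := by
  intro φ
  induction φ with
  | bot => intro θ h; simp [MuForm.subformulas] at h; subst h; exact subset_rfl
  | top => intro θ h; simp [MuForm.subformulas] at h; subst h; exact subset_rfl
  | var p => intro θ h; simp [MuForm.subformulas] at h; subst h; exact subset_rfl
  | nvar p => intro θ h; simp [MuForm.subformulas] at h; subst h; exact subset_rfl
  | and a b iha ihb =>
      intro θ h
      simp [MuForm.subformulas] at h
      rcases h with h | h | h
      · subst h; exact subset_rfl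
      · intro x hx; simp [MuForm.subformulas]; exact Or.inr (Or.inl (iha h hx))
      · intro x hx; simp [MuForm.subformulas]; exact Or.inr (Or.inr (ihb h hx))
  | or a b iha ihb =>
      intro θ h
      simp [MuForm.subformulas] at h
      rcases h with h | h | h
      · subst h; exact subset_rfl
      · intro x hx; simp [MuForm.subformulas]; exact Or.inr (Or.inl (iha h hx))
      · intro x hx; simp [MuForm.subformulas]; exact Or.inr (Or.inr (ihb h hx))
  | box a iha =>
      intro θ h
      simp [MuForm.subformulas] at h
      rcases h with h | h
      · subst h; exact subset_rfl
      · intro x hx; simp [MuForm.subformulas]; exact Or.inr (iha h hx)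
  | dia a iha =>
      intro θ h
      simp [MuForm.subformulas] at h
      rcases h with h | h
      · subst h; exact subset_rfl
      · intro x hx; simp [MuForm.subformulas]; exact Or.inr (iha h hx)
  | mu q a iha =>
      intro θ h
      simp [MuForm.subformulas] at h
      rcases h with h | h
      · subst h; exact subset_rfl
      · intro x hx; simp [MuForm.subformulas]; exact Or.inr (iha h hx)
  | nu q a iha =>
      intro θ h
      simp [MuForm.subformulas] at h
      rcases h with h | h
      · subst h; exact subset_rfl
      · intro x hx; simp [MuForm.subformulas]; exact Or.inr (iha h hx)

theorem boundIn_mono {χ φ : MuForm P} {p : P}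
    (hs : χ.subformulas ⊆ φ.subformulas) : χ.BoundIn p → φ.BoundIn p :=
  fun ⟨ψ, h⟩ => ⟨ψ, h.imp (fun h => hs h) (fun h => hs h)⟩

theorem var_free_or_bound : ∀ {χ : MuForm P} {p : P}, MuForm.var p ∈ χ.subformulas →
    p ∈ χ.freeVars ∨ MuForm.BoundIn p χ := by
  intro χ
  induction χ with
  | bot => intro p h; simp [MuForm.subformulas] at h
  | top => intro p h; simp [MuForm.subformulas] at h
  | var q =>
      intro p h
      simp [MuForm.subformulas] at h
      left
      simp [MuForm.freeVars, h]
  | nvar q => intro p h; simp [MuForm.subformulas] at h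
  | and a b iha ihb =>
      intro p h
      simp [MuForm.subformulas] at h
      have hsa : a.subformulas ⊆ (MuForm.and a b).subformulas :=
        subformulas_trans (by simp [MuForm.subformulas, MuForm.self_mem_subformulas])
      have hsb : b.subformulas ⊆ (MuForm.and a b).subformulas :=
        subformulas_trans (by simp [MuForm.subformulas, MuForm.self_mem_subformulas])
      rcases h with h | h
      · rcases iha h with hf | hb'
        · exact Or.inl (Set.mem_union_left _ hf)
        · exact Or.inr (boundIn_mono hsa hb')
      · rcases ihb h with hf | hb'
        · exact Or.inl (Set.mem_union_right _ hf)
        · exact Or.inr (boundIn_mono hsb hb')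
  | or a b iha ihb =>
      intro p h
      simp [MuForm.subformulas] at h
      have hsa : a.subformulas ⊆ (MuForm.or a b).subformulas :=
        subformulas_trans (by simp [MuForm.subformulas, MuForm.self_mem_subformulas])
      have hsb : b.subformulas ⊆ (MuForm.or a b).subformulas :=
        subformulas_trans (by simp [MuForm.subformulas, MuForm.self_mem_subformulas])
      rcases h with h | h
      · rcases iha h with hf | hb'
        · exact Or.inl (Set.mem_union_left _ hf)
        · exact Or.inr (boundIn_mono hsa hb')
      · rcases ihb h with hf | hb'
        · exact Or.inl (Set.mem_union_right _ hf)
        · exact Or.inr (boundIn_mono hsb hb')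
  | box a iha =>
      intro p h
      simp [MuForm.subformulas] at h
      have hsa : a.subformulas ⊆ (MuForm.box a).subformulas :=
        subformulas_trans (by simp [MuForm.subformulas, MuForm.self_mem_subformulas])
      rcases iha h with hf | hb'
      · exact Or.inl hf
      · exact Or.inr (boundIn_mono hsa hb')
  | dia a iha =>
      intro p h
      simp [MuForm.subformulas] at h
      have hsa : a.subformulas ⊆ (MuForm.dia a).subformulas :=
        subformulas_trans (by simp [MuForm.subformulas, MuForm.self_mem_subformulas])
      rcases iha h with hf | hb'
      · exact Or.inl hf
      · exact Or.inr (boundIn_mono hsa hb')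
  | mu q a iha =>
      intro p h
      simp [MuForm.subformulas] at h
      have hsa : a.subformulas ⊆ (MuForm.mu q a).subformulas :=
        subformulas_trans (by simp [MuForm.subformulas, MuForm.self_mem_subformulas])
      rcases iha h with hf | hb'
      · by_cases hpq : p = q
        · subst hpq
          exact Or.inr ⟨a, Or.inl (MuForm.self_mem_subformulas _)⟩
        · exact Or.inl ⟨hf, hpq⟩
      · exact Or.inr (boundIn_mono hsa hb')
  | nu q a iha =>
      intro p h
      simp [MuForm.subformulas] at h
      have hsa : a.subformulas ⊆ (MuForm.nu q a).subformulas :=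
        subformulas_trans (by simp [MuForm.subformulas, MuForm.self_mem_subformulas])
      rcases iha h with hf | hb'
      · by_cases hpq : p = q
        · subst hpq
          exact Or.inr ⟨a, Or.inr (MuForm.self_mem_subformulas _)⟩
        · exact Or.inl ⟨hf, hpq⟩
      · exact Or.inr (boundIn_mono hsa hb')

end MCAux


namespace MCAux
variable {P S : Type*} [DecidableEq P]

theorem mcGame_restrict (R : S → S → Prop) (φ χ : MuForm P) (hnf : φ.NormalForm)
    (hχ : χ ∈ φ.subformulas) (hfree : χ.freeVars ⊆ φ.freeVars)
    (κ : P → Set S) (u : {ψ : MuForm P // ψ ∈ χ.subformulas} × S) :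
    (mcGame R χ κ).Wins0 u ↔
      (mcGame R φ κ).Wins0 (⟨⟨u.1.1, subformulas_trans hχ u.1.2⟩, u.2⟩) := by
  classical
  have hsub : χ.subformulas ⊆ φ.subformulas := subformulas_trans hχ
  set f : {ψ : MuForm P // ψ ∈ χ.subformulas} × S → {ψ : MuForm P // ψ ∈ φ.subformulas} × S :=
    fun v => (⟨v.1.1, hsub v.1.2⟩, v.2) with hfdef
  have hinj : Function.Injective f := by
    intro a b h
    have h1 : a.1.1 = b.1.1 := congrArg (fun x => x.1.1) h
    have h2 : a.2 = b.2 := congrArg (fun x => x.2) h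
    exact Prod.ext (Subtype.ext h1) h2
  have howner : ∀ u, (mcGame R φ κ).owner (f u) = (mcGame R χ κ).owner u := by
    rintro ⟨⟨θ, hθ⟩, t⟩
    show (if mcPlayer0 φ κ (θ, t) then (0 : Fin 2) else 1) =
      (if mcPlayer0 χ κ (θ, t) then (0 : Fin 2) else 1)
    have hiff : mcPlayer0 φ κ (θ, t) ↔ mcPlayer0 χ κ (θ, t) := by
      cases θ with
      | var p =>
          show (MuForm.BoundIn p φ ∨ (p ∈ φ.freeVars ∧ t ∉ κ p)) ↔
            (MuForm.BoundIn p χ ∨ (p ∈ χ.freeVars ∧ t ∉ κ p))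
          rcases var_free_or_bound hθ with hf | hb
          · have hfφ : p ∈ φ.freeVars := hfree hf
            have hnbφ : ¬ MuForm.BoundIn p φ := hnf.2 p hfφ
            have hnbχ : ¬ MuForm.BoundIn p χ := fun h => hnbφ (boundIn_mono hsub h)
            constructor
            · rintro (h | ⟨-, hs⟩)
              · exact absurd h hnbφ
              · exact Or.inr ⟨hf, hs⟩
            · rintro (h | ⟨-, hs⟩)
              · exact absurd h hnbχ
              · exact Or.inr ⟨hfφ, hs⟩
          · exact ⟨fun _ => Or.inl hb, fun _ => Or.inl (boundIn_mono hsub hb)⟩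
      | bot => exact Iff.rfl
      | top => exact Iff.rfl
      | nvar p => exact Iff.rfl
      | and a b => exact Iff.rfl
      | or a b => exact Iff.rfl
      | box a => exact Iff.rfl
      | dia a => exact Iff.rfl
      | mu q a => exact Iff.rfl
      | nu q a => exact Iff.rfl
    by_cases h : mcPlayer0 χ κ (θ, t)
    · rw [if_pos h, if_pos (hiff.mpr h)]
    · rw [if_neg h, if_neg (fun h' => h (hiff.mp h'))]
  have hprio : ∀ u, (mcGame R φ κ).prio (f u) = (mcGame R χ κ).prio u := fun u => rfl
  have hedge : ∀ u w, (mcGame R χ κ).E u w ↔ (mcGame R φ κ).E (f u) (f w) := by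
    rintro ⟨⟨θ, hθ⟩, t⟩ ⟨⟨θ', hθ'⟩, t'⟩
    show mcEdge R χ (θ, t) (θ', t') ↔ mcEdge R φ (θ, t) (θ', t')
    cases θ with
    | var p =>
        show (t' = t ∧ θ' ∈ χ.subformulas ∧ _) ↔ (t' = t ∧ θ' ∈ φ.subformulas ∧ _)
        constructor
        · rintro ⟨h1, h2, h3⟩
          exact ⟨h1, hsub h2, h3⟩
        · rintro ⟨h1, h2, h3⟩
          exact ⟨h1, hθ', h3⟩
    | bot => exact Iff.rfl
    | top => exact Iff.rfl
    | nvar p => exact Iff.rfl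
    | and a b => exact Iff.rfl
    | or a b => exact Iff.rfl
    | box a => exact Iff.rfl
    | dia a => exact Iff.rfl
    | mu q a => exact Iff.rfl
    | nu q a => exact Iff.rfl
  have hclosed : ∀ u w', (mcGame R φ κ).E (f u) w' → ∃ w, f w = w' := by
    rintro ⟨⟨θ, hθ⟩, t⟩ ⟨⟨θ', hθ'⟩, t'⟩ he
    suffices hmem : θ' ∈ χ.subformulas by
      exact ⟨(⟨θ', hmem⟩, t'), rfl⟩
    replace he : mcEdge R φ (θ, t) (θ', t') := he
    cases θ with
    | bot => exact absurd he not_false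
    | top => exact absurd he not_false
    | nvar p => exact absurd he not_false
    | and a b =>
        obtain ⟨-, h | h⟩ := he <;> subst h
        · exact subformulas_trans hθ (by simp [MuForm.subformulas, MuForm.self_mem_subformulas])
        · exact subformulas_trans hθ (by simp [MuForm.subformulas, MuForm.self_mem_subformulas])
    | or a b =>
        obtain ⟨-, h | h⟩ := he <;> subst h
        · exact subformulas_trans hθ (by simp [MuForm.subformulas, MuForm.self_mem_subformulas])
        · exact subformulas_trans hθ (by simp [MuForm.subformulas, MuForm.self_mem_subformulas])
    | box a =>
        obtain ⟨h, -⟩ := he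
        subst h
        exact subformulas_trans hθ (by simp [MuForm.subformulas, MuForm.self_mem_subformulas])
    | dia a =>
        obtain ⟨h, -⟩ := he
        subst h
        exact subformulas_trans hθ (by simp [MuForm.subformulas, MuForm.self_mem_subformulas])
    | mu q a =>
        obtain ⟨-, h⟩ := he
        subst h
        exact subformulas_trans hθ (by simp [MuForm.subformulas, MuForm.self_mem_subformulas])
    | nu q a =>
        obtain ⟨-, h⟩ := he
        subst h
        exact subformulas_trans hθ (by simp [MuForm.subformulas, MuForm.self_mem_subformulas])
    | var p =>
        obtain ⟨-, hθ'φ, hfix⟩ := he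
        rcases var_free_or_bound hθ with hf | ⟨ψb, hb | hb⟩
        · exfalso
          apply hnf.2 p (hfree hf)
          obtain ⟨ψ0, h0⟩ := hfix
          refine ⟨ψ0, ?_⟩
          rcases h0 with h0 | h0
          · exact Or.inl (h0 ▸ hθ'φ)
          · exact Or.inr (h0 ▸ hθ'φ)
        · have heq : θ' = MuForm.mu p ψb :=
            hnf.1 p θ' (MuForm.mu p ψb) hθ'φ (hsub hb) hfix ⟨ψb, Or.inl rfl⟩
          rw [heq]
          exact hb
        · have heq : θ' = MuForm.nu p ψb :=
            hnf.1 p θ' (MuForm.nu p ψb) hθ'φ (hsub hb) hfix ⟨ψb, Or.inr rfl⟩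
          rw [heq]
          exact hb
  constructor
  · exact fun h => wins0_pushforward (mcGame R χ κ) (mcGame R φ κ) f hinj howner hprio hedge hclosed u h
  · exact fun h => wins0_pullback (mcGame R χ κ) (mcGame R φ κ) f howner hprio hedge hclosed u h

end MCAux

/-- Player `0` wins the model-checking game `G(ψ₁∨ψ₂)` from `(ψ₁∨ψ₂, s)` iff
Player `0` wins `G(ψ₁)` from `(ψ₁, s)` or Player `0` wins `G(ψ₂)` from
`(ψ₂, s)`. -/
theorem mcGame_or_wins_iff (R : S → S → Prop) (ψ₁ ψ₂ : MuForm P)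
    (hnf : (MuForm.or ψ₁ ψ₂).NormalForm) (κ : P → Set S) (s : S) :
    (mcGame R (MuForm.or ψ₁ ψ₂) κ).Wins0
        (⟨MuForm.or ψ₁ ψ₂, (MuForm.or ψ₁ ψ₂).self_mem_subformulas⟩, s) ↔
      (mcGame R ψ₁ κ).Wins0 (⟨ψ₁, ψ₁.self_mem_subformulas⟩, s) ∨
        (mcGame R ψ₂ κ).Wins0 (⟨ψ₂, ψ₂.self_mem_subformulas⟩, s) := by
  classical
  have h1mem := MuForm.left_mem_subformulas_or ψ₁ ψ₂
  have h2mem := MuForm.right_mem_subformulas_or ψ₁ ψ₂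
  have hfree1 : ψ₁.freeVars ⊆ (MuForm.or ψ₁ ψ₂).freeVars :=
    fun x hx => Set.mem_union_left _ hx
  have hfree2 : ψ₂.freeVars ⊆ (MuForm.or ψ₁ ψ₂).freeVars :=
    fun x hx => Set.mem_union_right _ hx
  have hr1 := MCAux.mcGame_restrict R (MuForm.or ψ₁ ψ₂) ψ₁ hnf h1mem hfree1 κ
    (⟨ψ₁, ψ₁.self_mem_subformulas⟩, s)
  have hr2 := MCAux.mcGame_restrict R (MuForm.or ψ₁ ψ₂) ψ₂ hnf h2mem hfree2 κ
    (⟨ψ₂, ψ₂.self_mem_subformulas⟩, s)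
  set G := mcGame R (MuForm.or ψ₁ ψ₂) κ with hGdef
  set vφ : {ψ : MuForm P // ψ ∈ (MuForm.or ψ₁ ψ₂).subformulas} × S :=
    (⟨MuForm.or ψ₁ ψ₂, (MuForm.or ψ₁ ψ₂).self_mem_subformulas⟩, s) with hvφdef
  set va : {ψ : MuForm P // ψ ∈ (MuForm.or ψ₁ ψ₂).subformulas} × S :=
    (⟨ψ₁, h1mem⟩, s) with hvadef
  set vb : {ψ : MuForm P // ψ ∈ (MuForm.or ψ₁ ψ₂).subformulas} × S :=
    (⟨ψ₂, h2mem⟩, s) with hvbdef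
  have hoφ : G.owner vφ = 0 := by
    show (if mcPlayer0 (MuForm.or ψ₁ ψ₂) κ (MuForm.or ψ₁ ψ₂, s) then (0 : Fin 2) else 1) = 0
    rw [if_pos (show mcPlayer0 (MuForm.or ψ₁ ψ₂) κ (MuForm.or ψ₁ ψ₂, s) from trivial)]
  have hEva : G.E vφ va := ⟨rfl, Or.inl rfl⟩
  have hEvb : G.E vφ vb := ⟨rfl, Or.inr rfl⟩
  have hsucc : ∀ w, G.E vφ w → w = va ∨ w = vb := by
    rintro ⟨⟨θ, hθ⟩, t⟩ he
    replace he : mcEdge R (MuForm.or ψ₁ ψ₂) (MuForm.or ψ₁ ψ₂, s) (θ, t) := he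
    obtain ⟨rfl, h | h⟩ := he <;> subst h
    · exact Or.inl rfl
    · exact Or.inr rfl
  have hnopred : ∀ w, ¬ G.E w vφ := by
    rintro ⟨⟨θ, hθ⟩, t⟩ he
    replace he : mcEdge R (MuForm.or ψ₁ ψ₂) (θ, t) (MuForm.or ψ₁ ψ₂, s) := he
    have hfs := MuForm.fsize_le_of_mem_subformulas hθ
    cases θ with
    | bot => exact he
    | top => exact he
    | nvar p => exact he
    | var p =>
        obtain ⟨-, -, ψ0, h0 | h0⟩ := he <;> simp at h0
    | and a b =>
        obtain ⟨-, h | h⟩ := he <;> subst h <;>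
          simp [MuForm.fsize] at hfs <;>
          [have := MCAux.fsize_pos b; have := MCAux.fsize_pos a] <;> omega
    | or a b =>
        obtain ⟨-, h | h⟩ := he <;> subst h <;>
          simp [MuForm.fsize] at hfs <;>
          [have := MCAux.fsize_pos b; have := MCAux.fsize_pos a] <;> omega
    | box a =>
        obtain ⟨h, -⟩ := he
        subst h
        simp [MuForm.fsize] at hfs
    | dia a =>
        obtain ⟨h, -⟩ := he
        subst h
        simp [MuForm.fsize] at hfs
    | mu q a =>
        obtain ⟨-, h⟩ := he
        subst h
        simp [MuForm.fsize] at hfs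
    | nu q a =>
        obtain ⟨-, h⟩ := he
        subst h
        simp [MuForm.fsize] at hfs
  have hnd : ¬ G.DeadEnd vφ := fun h => h va hEva
  constructor
  · rintro ⟨σ', hσ'⟩
    have hw0 : G.Wins0 (σ' [vφ]) := MCAux.wins0_unstep G vφ σ' hoφ hnd hσ'
    have hE : G.E vφ (σ' [vφ]) := hσ'.1 [vφ] vφ (by simp [List.Chain']) (by simp) hoφ hnd
    rcases hsucc _ hE with heq | heq
    · rw [heq] at hw0
      exact Or.inl (hr1.mpr hw0)
    · rw [heq] at hw0
      exact Or.inr (hr2.mpr hw0)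
  · rintro (h1 | h2)
    · exact MCAux.wins0_step G vφ va hoφ hEva hnopred (hr1.mp h1)
    · exact MCAux.wins0_step G vφ vb hoφ hEvb hnopred (hr2.mp h2)
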